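/- The relativistic Euler system with energy e = r·p is hyperbolic: the five-dimensional constraint space V = {(δn, δT, δU) ∈ ℝ × ℝ × ℝ⁴ : η(U, δU) = 0} decomposes as the direct sum V = S₀ ⊕ S_{1/√r} ⊕ S_{−1/√r} of the solution spaces of the characteristic (wave) system for the eigenvalues λ = 0, λ = 1/√r and λ = −1/√r; in particular there exists a basis of V consisting of five eigenvectors. -/

import Mathlib

open MeasureTheory Real Filter Set

/-- The Minkowski bilinear form on `ℝ⁴`. -/
def eta (x y : Fin 4 → ℝ) : ℝ :=
  x 0 * y 0 - x 1 * y 1 - x 2 * y 2 - x 3 * y 3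

/-- The characteristic (wave) system of the relativistic Euler equations with
energy `e = r·p`, for the characteristic speed `lam` (in light speed units), in the
unknowns `v = (δn, δT, δU)`, including the linearized constraint `η(U, δU) = 0`. -/
def WaveSol (c n T r lam : ℝ) (U ν : Fin 4 → ℝ) (v : ℝ × ℝ × (Fin 4 → ℝ)) : Prop :=
  eta U v.2.2 = 0 ∧
  -- (E1)
  (-(lam * c) * v.1 + n * eta ν v.2.2 = 0) ∧
  -- (E2)
  (∀ β : Fin 4,
    -(ν β) * (T * v.1 + n * v.2.1) + n * T * ((r + 1) / c ^ 2) * U β * eta ν v.2.2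
      - (lam / c) * (r * U β * (T * v.1 + n * v.2.1) + n * T * (r + 1) * v.2.2 β) = 0)

/-- Solution space of the wave system as a submodule. -/
def waveSub (c n T r lam : ℝ) (U ν : Fin 4 → ℝ) : Submodule ℝ (ℝ × ℝ × (Fin 4 → ℝ)) where
  carrier := {v | WaveSol c n T r lam U ν v}
  zero_mem' := by
    refine ⟨by simp [eta], by simp [eta], fun β => by simp [eta]⟩
  add_mem' := by
    rintro a b ⟨ha1, ha2, ha3⟩ ⟨hb1, hb2, hb3⟩
    simp only [WaveSol, eta, Set.mem_setOf_eq, Prod.fst_add, Prod.snd_add, Pi.add_apply] at *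
    refine ⟨by linear_combination ha1 + hb1, by linear_combination ha2 + hb2, fun β => ?_⟩
    linear_combination ha3 β + hb3 β
  smul_mem' := by
    rintro s a ⟨ha1, ha2, ha3⟩
    simp only [WaveSol, eta, Set.mem_setOf_eq, Prod.smul_fst, Prod.smul_snd, Pi.smul_apply,
      smul_eq_mul] at *
    refine ⟨by linear_combination s * ha1, by linear_combination s * ha2, fun β => ?_⟩
    linear_combination s * ha3 β

/-- The constraint space as a submodule. -/
def conSub (U : Fin 4 → ℝ) : Submodule ℝ (ℝ × ℝ × (Fin 4 → ℝ)) where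
  carrier := {v | eta U v.2.2 = 0}
  zero_mem' := by simp [eta]
  add_mem' := by
    rintro a b ha hb
    simp only [eta, Set.mem_setOf_eq, Prod.snd_add, Pi.add_apply] at *
    linear_combination ha + hb
  smul_mem' := by
    rintro s a ha
    simp only [eta, Set.mem_setOf_eq, Prod.smul_snd, Pi.smul_apply, smul_eq_mul] at *
    linear_combination s * ha

lemma zero_char (c n T r : ℝ) (hn : n ≠ 0) (U ν : Fin 4 → ℝ) (hν : eta ν ν = -1)
    (hUν : eta U ν = 0) (x : ℝ × ℝ × (Fin 4 → ℝ)) :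
    WaveSol c n T r 0 U ν x ↔
      eta U x.2.2 = 0 ∧ eta ν x.2.2 = 0 ∧ T * x.1 + n * x.2.1 = 0 := by
  constructor
  · rintro ⟨h1, h2, h3⟩
    have hQ : eta ν x.2.2 = 0 := by
      have : n * eta ν x.2.2 = 0 := by linear_combination h2
      exact (mul_eq_zero.mp this).resolve_left hn
    refine ⟨h1, hQ, ?_⟩
    have e0 := h3 0; have e1 := h3 1; have e2 := h3 2; have e3 := h3 3
    simp only [eta] at e0 e1 e2 e3 hν hUν hQ ⊢
    linear_combination (ν 0) * e0 - (ν 1) * e1 - (ν 2) * e2 - (ν 3) * e3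
      + (T * x.1 + n * x.2.1) * hν
      - (n * T * ((r + 1) / c ^ 2) * (ν 0 * x.2.2 0 - ν 1 * x.2.2 1 - ν 2 * x.2.2 2 - ν 3 * x.2.2 3)) * hUν
  · rintro ⟨h1, hQ, hP⟩
    exact ⟨h1, by rw [hQ]; ring, fun β => by rw [hQ, hP]; ring⟩
lemma lam_char (c n T r lam : ℝ) (hc : c ≠ 0) (hn : n ≠ 0) (hT : T ≠ 0) (hr : 0 < r)
    (hlr : lam ^ 2 * r = 1) (U ν : Fin 4 → ℝ) (hU : eta U U = c ^ 2) (hν : eta ν ν = -1)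
    (hUν : eta U ν = 0) (x : ℝ × ℝ × (Fin 4 → ℝ)) :
    WaveSol c n T r lam U ν x ↔
      ∃ s : ℝ, x = s • ((n * r : ℝ), ((T : ℝ), fun i => -(c / lam) * ν i)) := by
  have hlam : lam ≠ 0 := by
    intro h; rw [h] at hlr; norm_num at hlr
  have hr1 : r + 1 ≠ 0 := by nlinarith
  have hM : lam * c * (n * T * (r + 1)) ≠ 0 := by
    exact mul_ne_zero (mul_ne_zero hlam hc) (mul_ne_zero (mul_ne_zero hn hT) hr1)
  constructor
  · rintro ⟨h1, h2, h3⟩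
    simp only [eta] at h1 h2 h3 hU hν hUν
    set Q : ℝ := ν 0 * x.2.2 0 - ν 1 * x.2.2 1 - ν 2 * x.2.2 2 - ν 3 * x.2.2 3 with hQdef
    set P : ℝ := T * x.1 + n * x.2.1 with hPdef
    have E : ∀ β : Fin 4, -(ν β) * P * c ^ 2 + n * T * (r + 1) * U β * Q
        - lam * c * (r * U β * P + n * T * (r + 1) * x.2.2 β) = 0 := by
      intro β
      have e := h3 β
      field_simp at e
      have h' : c * (-(ν β) * P * c ^ 2 + n * T * (r + 1) * U β * Q
          - lam * c * (r * U β * P + n * T * (r + 1) * x.2.2 β)) = 0 := by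
        linear_combination c * e
      have := (mul_eq_zero.mp h').resolve_left hc
      linarith
    have hA : n * T * (r + 1) * Q - lam * r * c * P = 0 := by
      have hA2 : c ^ 2 * (n * T * (r + 1) * Q - lam * r * c * P) = 0 := by
        linear_combination (U 0) * E 0 - (U 1) * E 1 - (U 2) * E 2 - (U 3) * E 3
          + (P * c ^ 2) * hUν + (lam * c * (n * T * (r + 1))) * h1
          + (lam * c * r * P - n * T * (r + 1) * Q) * hU
      have := (mul_eq_zero.mp hA2).resolve_left (pow_ne_zero 2 hc)
      linarith
    have hB : c * P - lam * (n * T * (r + 1)) * Q = 0 := by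
      have hB2 : c * (c * P - lam * (n * T * (r + 1)) * Q) = 0 := by
        linear_combination (ν 0) * E 0 - (ν 1) * E 1 - (ν 2) * E 2 - (ν 3) * E 3
          + (P * c ^ 2) * hν
          + (lam * c * r * P - n * T * (r + 1) * Q) * hUν
      have := (mul_eq_zero.mp hB2).resolve_left hc
      linarith
    have hu : ∀ i : Fin 4, x.2.2 i = -Q * ν i := by
      intro i
      have h := E i
      have h2' : lam * c * (n * T * (r + 1)) * (x.2.2 i + Q * ν i) = 0 := by
        linear_combination (-1 : ℝ) * h + (U i) * hA - (c * ν i) * hB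
      have := (mul_eq_zero.mp h2').resolve_left hM
      linarith
    have hx1 : c * x.1 = n * r * lam * Q := by
      linear_combination (-(r * lam)) * h2 - (c * x.1) * hlr
    have hx2 : c * x.2.1 = lam * T * Q := by
      have h' : n * (c * x.2.1 - lam * T * Q) = 0 := by
        linear_combination hB - T * hx1
      have := (mul_eq_zero.mp h').resolve_left hn
      linarith
    refine ⟨Q * lam / c, ?_⟩
    refine Prod.ext ?_ (Prod.ext ?_ ?_)
    · show x.1 = Q * lam / c * (n * r)
      field_simp
      linear_combination hx1
    · show x.2.1 = Q * lam / c * T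
      field_simp
      linear_combination hx2
    · show x.2.2 = fun i => Q * lam / c * (-(c / lam) * ν i)
      funext i
      show x.2.2 i = Q * lam / c * (-(c / lam) * ν i)
      rw [hu i]
      field_simp
  · rintro ⟨s, rfl⟩
    refine ⟨?_, ?_, fun β => ?_⟩
    · show eta U (fun i => s * (-(c / lam) * ν i)) = 0
      simp only [eta] at hUν ⊢
      linear_combination (-(s * c / lam)) * hUν
    · show -(lam * c) * (s * (n * r)) + n * eta ν (fun i => s * (-(c / lam) * ν i)) = 0
      simp only [eta] at hν ⊢
      field_simp
      linear_combination (-(c*s*n)) * hν + (-(c*s*n)) * hlr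
    · show -(ν β) * (T * (s * (n * r)) + n * (s * T))
          + n * T * ((r + 1) / c ^ 2) * U β * eta ν (fun i => s * (-(c / lam) * ν i))
          - (lam / c) * (r * U β * (T * (s * (n * r)) + n * (s * T))
            + n * T * (r + 1) * (s * (-(c / lam) * ν β))) = 0
      simp only [eta] at hν ⊢
      field_simp
      ring_nf
      linear_combination (-(U β*T*s*n*(1+r))) * hν
        + (-(U β*T*s*n*(1+r))) * hlr

/-- Hyperbolicity: the five-dimensional constraint space `V = {η(U, δU) = 0}` is the
direct sum of the solution spaces of the characteristic system for the eigenvalues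
`λ = 0`, `λ = 1/√r`, `λ = -1/√r`; in particular `V` has a basis of five eigenvectors. -/
theorem wave_system_hyperbolicity (c n T r : ℝ) (hc : 0 < c) (hn : 0 < n) (hT : 0 < T)
    (hr : 0 < r) (U ν : Fin 4 → ℝ) (hU : eta U U = c ^ 2) (hν : eta ν ν = -1)
    (hUν : eta U ν = 0) :
    ∃ V S₀ Sₚ Sₘ : Submodule ℝ (ℝ × ℝ × (Fin 4 → ℝ)),
      (V : Set (ℝ × ℝ × (Fin 4 → ℝ))) = {v | eta U v.2.2 = 0} ∧
      (S₀ : Set (ℝ × ℝ × (Fin 4 → ℝ))) = {v | WaveSol c n T r 0 U ν v} ∧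
      (Sₚ : Set (ℝ × ℝ × (Fin 4 → ℝ))) = {v | WaveSol c n T r (1 / Real.sqrt r) U ν v} ∧
      (Sₘ : Set (ℝ × ℝ × (Fin 4 → ℝ))) = {v | WaveSol c n T r (-(1 / Real.sqrt r)) U ν v} ∧
      S₀ ⊔ Sₚ ⊔ Sₘ = V ∧
      iSupIndep ![S₀, Sₚ, Sₘ] ∧
      Module.finrank ℝ V = 5 := by
  set sq := Real.sqrt r with hsqdef
  have hsq : sq ^ 2 = r := Real.sq_sqrt hr.le
  have hsq0 : sq ≠ 0 := by positivity
  have hlp : (1 / sq) ^ 2 * r = 1 := by rw [div_pow, one_pow, hsq]; field_simp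
  have hlm : (-(1 / sq)) ^ 2 * r = 1 := by rw [show (-(1/sq))^2 = (1/sq)^2 by ring]; exact hlp
  have hr1 : (0:ℝ) < r + 1 := by linarith
  refine ⟨conSub U, waveSub c n T r 0 U ν, waveSub c n T r (1/sq) U ν,
    waveSub c n T r (-(1/sq)) U ν, rfl, rfl, rfl, rfl, ?_, ?_, ?_⟩
  · -- sup = V
    apply le_antisymm
    · refine sup_le (sup_le ?_ ?_) ?_ <;> intro x hx <;> exact hx.1
    · intro x hx
      have hx' : eta U x.2.2 = 0 := hx
      have h1r : (1 : ℝ) + r ≠ 0 := by positivity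
      set q : ℝ := eta ν x.2.2 with hq
      set σ : ℝ := (T * x.1 + n * x.2.1) / (n * T * (1 + r)) with hσ
      set a : ℝ := x.1 - n * r * σ with ha
      set s : ℝ := (σ + q / (c * sq)) / 2 with hs
      set t : ℝ := (σ - q / (c * sq)) / 2 with ht
      have hx0 : ((a, (-(T * a) / n, fun i => x.2.2 i + q * ν i)) : ℝ × ℝ × (Fin 4 → ℝ))
          ∈ waveSub c n T r 0 U ν := by
        refine (zero_char c n T r (ne_of_gt hn) U ν hν hUν _).mpr ⟨?_, ?_, ?_⟩
        · show eta U (fun i => x.2.2 i + q * ν i) = 0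
          simp only [eta] at hx' hUν ⊢
          linear_combination hx' + q * hUν
        · show eta ν (fun i => x.2.2 i + q * ν i) = 0
          simp only [eta] at hν hq ⊢
          linear_combination (-1 : ℝ) * hq + q * hν
        · show T * a + n * (-(T * a) / n) = 0
          field_simp
          ring
      have hxp : s • ((n * r : ℝ), ((T : ℝ), fun i => -(c / (1 / sq)) * ν i))
          ∈ waveSub c n T r (1 / sq) U ν :=
        (lam_char c n T r (1 / sq) (ne_of_gt hc) (ne_of_gt hn) (ne_of_gt hT) hr hlp
          U ν hU hν hUν _).mpr ⟨s, rfl⟩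
      have hxm : t • ((n * r : ℝ), ((T : ℝ), fun i => -(c / (-(1 / sq))) * ν i))
          ∈ waveSub c n T r (-(1 / sq)) U ν :=
        (lam_char c n T r (-(1 / sq)) (ne_of_gt hc) (ne_of_gt hn) (ne_of_gt hT) hr hlm
          U ν hU hν hUν _).mpr ⟨t, rfl⟩
      have hdec : x = ((a, (-(T * a) / n, fun i => x.2.2 i + q * ν i)) : ℝ × ℝ × (Fin 4 → ℝ))
          + s • ((n * r : ℝ), ((T : ℝ), fun i => -(c / (1 / sq)) * ν i))
          + t • ((n * r : ℝ), ((T : ℝ), fun i => -(c / (-(1 / sq))) * ν i)) := by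
        have e1 : x.1 = a + s * (n * r) + t * (n * r) := by
          rw [ha, hs, ht]; ring
        have e2 : x.2.1 = -(T * a) / n + s * T + t * T := by
          rw [ha, hs, ht, hσ]
          field_simp
          ring
        have e3 : ∀ i, x.2.2 i = x.2.2 i + q * ν i
            + s * (-(c / (1 / sq)) * ν i) + t * (-(c / (-(1 / sq))) * ν i) := by
          intro i
          rw [hs, ht]
          field_simp
          ring
        refine Prod.ext ?_ (Prod.ext ?_ ?_) <;>
          simp only [Prod.fst_add, Prod.snd_add, Prod.smul_fst, Prod.smul_snd,
            Pi.add_apply, Pi.smul_apply, smul_eq_mul]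
        exacts [e1, e2, funext e3]
      rw [hdec]
      exact add_mem (add_mem (Submodule.mem_sup_left (Submodule.mem_sup_left hx0))
        (Submodule.mem_sup_left (Submodule.mem_sup_right hxp))) (Submodule.mem_sup_right hxm)
  · -- independence
    have memp := fun (x : ℝ × ℝ × (Fin 4 → ℝ)) =>
      lam_char c n T r (1 / sq) (ne_of_gt hc) (ne_of_gt hn) (ne_of_gt hT) hr hlp U ν hU hν hUν x
    have memm := fun (x : ℝ × ℝ × (Fin 4 → ℝ)) =>
      lam_char c n T r (-(1 / sq)) (ne_of_gt hc) (ne_of_gt hn) (ne_of_gt hT) hr hlm U ν hU hν hUν x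
    have mem0 := fun (x : ℝ × ℝ × (Fin 4 → ℝ)) =>
      zero_char c n T r (ne_of_gt hn) U ν hν hUν x
    set wp : ℝ × ℝ × (Fin 4 → ℝ) := ((n * r : ℝ), ((T : ℝ), fun i => -(c / (1 / sq)) * ν i))
      with hwp
    set wm : ℝ × ℝ × (Fin 4 → ℝ) := ((n * r : ℝ), ((T : ℝ), fun i => -(c / (-(1 / sq))) * ν i))
      with hwm
    have key : ∀ s t : ℝ, eta ν (s • wp + t • wm).2.2 = 0 →
        T * (s • wp + t • wm).1 + n * (s • wp + t • wm).2.1 = 0 → s = 0 ∧ t = 0 := by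
      intro s t hQ hP
      simp only [hwp, hwm, Prod.fst_add, Prod.snd_add, Prod.smul_fst, Prod.smul_snd,
        Pi.add_apply, Pi.smul_apply, smul_eq_mul, eta] at hQ hP
      simp only [eta] at hν
      have hst : s = t := by
        have h' : c * sq * (s - t) = 0 := by
          field_simp at hQ
          linear_combination hQ + (c * sq * (s - t)) * hν
        have := (mul_eq_zero.mp h').resolve_left (mul_ne_zero (ne_of_gt hc) hsq0)
        linarith
      have hsum : s + t = 0 := by
        have h' : (n * T * (r + 1)) * (s + t) = 0 := by linear_combination hP
        have := (mul_eq_zero.mp h').resolve_left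
          (by positivity : n * T * (r + 1) ≠ 0)
        linarith
      constructor <;> linarith
    have hd1 : Disjoint (waveSub c n T r 0 U ν)
        (waveSub c n T r (1 / sq) U ν ⊔ waveSub c n T r (-(1 / sq)) U ν) := by
      rw [Submodule.disjoint_def]
      intro x hx0 hxpm
      rw [Submodule.mem_sup] at hxpm
      obtain ⟨y, hy, z, hz, hyz⟩ := hxpm
      obtain ⟨s, rfl⟩ := (memp y).mp hy
      obtain ⟨t, rfl⟩ := (memm z).mp hz
      rw [← hyz] at hx0 ⊢
      obtain ⟨-, hQ, hP⟩ := (mem0 _).mp hx0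
      obtain ⟨hs0, ht0⟩ := key s t hQ hP
      rw [hs0, ht0, zero_smul, zero_smul, add_zero]
    have hd2 : Disjoint (waveSub c n T r (1 / sq) U ν)
        (waveSub c n T r 0 U ν ⊔ waveSub c n T r (-(1 / sq)) U ν) := by
      rw [Submodule.disjoint_def]
      intro x hxp hx0m
      obtain ⟨s, rfl⟩ := (memp x).mp hxp
      rw [Submodule.mem_sup] at hx0m
      obtain ⟨y, hy0, z, hz, hyz⟩ := hx0m
      obtain ⟨t, rfl⟩ := (memm z).mp hz
      have hy' : y = s • wp + (-t) • wm := by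
        rw [neg_smul, ← sub_eq_add_neg]
        exact eq_sub_of_add_eq hyz
      obtain ⟨-, hQ, hP⟩ := (mem0 y).mp hy0
      rw [hy'] at hQ hP
      obtain ⟨hs0, -⟩ := key s (-t) hQ hP
      rw [hs0, zero_smul]
    have hd3 : Disjoint (waveSub c n T r (-(1 / sq)) U ν)
        (waveSub c n T r 0 U ν ⊔ waveSub c n T r (1 / sq) U ν) := by
      rw [Submodule.disjoint_def]
      intro x hxm hx0p
      obtain ⟨t, rfl⟩ := (memm x).mp hxm
      rw [Submodule.mem_sup] at hx0p
      obtain ⟨y, hy0, z, hz, hyz⟩ := hx0p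
      obtain ⟨s, rfl⟩ := (memp z).mp hz
      have hy' : y = (-s) • wp + t • wm := by
        rw [neg_smul, ← sub_eq_neg_add]
        exact eq_sub_of_add_eq hyz
      obtain ⟨-, hQ, hP⟩ := (mem0 y).mp hy0
      rw [hy'] at hQ hP
      obtain ⟨-, ht0⟩ := key (-s) t hQ hP
      rw [ht0, zero_smul]
    intro i
    fin_cases i
    · simp only [Matrix.cons_val_zero]
      refine hd1.mono_right ?_
      refine iSup_le fun j => iSup_le fun hj => ?_
      fin_cases j
      · simp at hj
      · simp only [Matrix.cons_val_one, Matrix.head_cons]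
        exact le_sup_left
      · simp only [Matrix.cons_val_two, Matrix.tail_cons, Matrix.head_cons]
        exact le_sup_right
    · simp only [Matrix.cons_val_one, Matrix.head_cons]
      refine hd2.mono_right ?_
      refine iSup_le fun j => iSup_le fun hj => ?_
      fin_cases j
      · simp only [Matrix.cons_val_zero]
        exact le_sup_left
      · simp at hj
      · simp only [Matrix.cons_val_two, Matrix.tail_cons, Matrix.head_cons]
        exact le_sup_right
    · simp only [Matrix.cons_val_two, Matrix.tail_cons, Matrix.head_cons]
      refine hd3.mono_right ?_
      refine iSup_le fun j => iSup_le fun hj => ?_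
      fin_cases j
      · simp only [Matrix.cons_val_zero]
        exact le_sup_left
      · simp only [Matrix.cons_val_one, Matrix.head_cons]
        exact le_sup_right
      · simp at hj
  · -- finrank
    set f : (ℝ × ℝ × (Fin 4 → ℝ)) →ₗ[ℝ] ℝ := {
      toFun := fun v => eta U v.2.2
      map_add' := by intros; simp [eta]; ring
      map_smul' := by intros; simp [eta]; ring } with hf
    have hVker : conSub U = LinearMap.ker f := by
      ext x
      simp [conSub, LinearMap.mem_ker, hf]
      exact Iff.rfl
    have hsurj : Function.Surjective f := by
      intro y
      refine ⟨((0:ℝ), (0:ℝ), fun i => y / c ^ 2 * U i), ?_⟩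
      show eta U (fun i => y / c ^ 2 * U i) = y
      simp only [eta] at hU ⊢
      field_simp
      linear_combination y * hU
    have hrn := LinearMap.finrank_range_add_finrank_ker f
    rw [LinearMap.range_eq_top.mpr hsurj] at hrn
    rw [hVker]
    have h6 : Module.finrank ℝ (ℝ × ℝ × (Fin 4 → ℝ)) = 6 := by
      simp [Module.finrank_prod, Module.finrank_self, Module.finrank_fin_fun]
    have h1 : Module.finrank ℝ (⊤ : Submodule ℝ ℝ) = 1 := by
      rw [finrank_top]; exact Module.finrank_self ℝ
    rw [h1, h6] at hrn
    omega
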